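/- Let p be a prime, q a positive integer divisible by p, m ≥ 3, 0 ≤ δ < m, and let the functions a^t_σ be defined as in the stated construction. Let t₁, t₂ ∈ {0,…,p^{k+δ}−1}, σ ∈ {0,…,p^k−1}, and let r, s ∈ {0,…,p^m−1} have p-ary digits satisfying r_{π_β(1)} ≠ s_{π_β(1)} for some fixed β ∈ {1,…,k}. For 1 ≤ j ≤ p−1, let σ^j ∈ {0,…,p^k−1} be the integer whose p-ary digits agree with those of σ except that the β-th digit is σ_β + j (mod p). Then ω_q^{a^{t₁}_{σ,r} − a^{t₂}_{σ,s}} + Σ_{j=1}^{p−1} ω_q^{a^{t₁}_{σ^j,r} − a^{t₂}_{σ^j,s}} = 0. -/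

import Mathlib

open Finset

/-- `i`-th (1-based) base-`p` digit of `r`, i.e. `r_i` where `r = Σ_i r_i p^(i-1)`. -/
def dig (p r i : ℕ) : ℕ := r / p ^ (i - 1) % p

/-- `ω_q^x = exp(2π√-1·x/q)` for `x ∈ ℤ_q`. -/
noncomputable def eomega (q : ℕ) (x : ZMod q) : ℂ :=
  Complex.exp (2 * Real.pi * Complex.I * (x.val : ℂ) / (q : ℂ))

/-- Aperiodic cross-correlation of two length-`N` `ℤ_q`-valued sequences at integer shift `τ`. -/
noncomputable def ccorr (q N : ℕ) (u v : ℕ → ZMod q) (τ : ℤ) : ℂ :=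
  if 0 ≤ τ then ∑ i ∈ Finset.range (N - τ.toNat), eomega q (u i - v (i + τ.toNat))
  else ∑ i ∈ Finset.range (N - (-τ).toNat), eomega q (u (i + (-τ).toNat) - v i)

/-- Aperiodic autocorrelation. -/
noncomputable def acorr (q N : ℕ) (u : ℕ → ZMod q) (τ : ℤ) : ℂ := ccorr q N u u τ

/-- Entry `a^t_{σ,r}` of the construction: with `(r_1,…,r_m)` the `p`-ary digits of `r`,
`a^t_σ(r) = (q/p) Σ_β Σ_γ r_{π_β(γ)} r_{π_β(γ+1)} + Σ_l λ_l r_l + λ_0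
 + (q/p)(Σ_β σ_β r_{π_β(1)} + Σ_β t_β r_{π_β(m_β)} + Σ_β t_{k+β} r_{m-δ+β})`. -/
def aseq (p q m δ k : ℕ) (mcard : ℕ → ℕ) (pmap : ℕ → ℕ → ℕ) (lam : ℕ → ZMod q)
    (t σ r : ℕ) : ZMod q :=
  (((q / p) * ∑ β ∈ Finset.Icc 1 k, ∑ γ ∈ Finset.Icc 1 (mcard β - 1),
      dig p r (pmap β γ) * dig p r (pmap β (γ + 1)) : ℕ) : ZMod q)
  + ∑ l ∈ Finset.Icc 1 m, lam l * (dig p r l : ZMod q) + lam 0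
  + (((q / p) * (∑ β ∈ Finset.Icc 1 k, dig p σ β * dig p r (pmap β 1)
      + ∑ β ∈ Finset.Icc 1 k, dig p t β * dig p r (pmap β (mcard β))
      + ∑ β ∈ Finset.Icc 1 δ, dig p t (k + β) * dig p r (m - δ + β)) : ℕ) : ZMod q)

noncomputable def zq (q : ℕ) : ℂ := Complex.exp (2 * Real.pi * Complex.I / q)

lemma eomega_eq_pow (q : ℕ) (x : ZMod q) : eomega q x = zq q ^ x.val := by
  rw [eomega, zq, ← Complex.exp_nat_mul]; ring_nf

lemma zq_pow_q (q : ℕ) (hq : 0 < q) : zq q ^ q = 1 := by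
  rw [zq, ← Complex.exp_nat_mul]
  have hq0 : (q : ℂ) ≠ 0 := Nat.cast_ne_zero.mpr hq.ne'
  have h : (q : ℂ) * (2 * Real.pi * Complex.I / q) = 2 * Real.pi * Complex.I := by field_simp
  rw [h, Complex.exp_two_pi_mul_I]

lemma zq_pow_mod (q : ℕ) (hq : 0 < q) (n : ℕ) : zq q ^ (n % q) = zq q ^ n := by
  conv_rhs => rw [← Nat.mod_add_div n q]
  rw [pow_add, pow_mul, zq_pow_q q hq, one_pow, mul_one]

lemma eomega_add (q : ℕ) (hq : 0 < q) (x y : ZMod q) :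
    eomega q (x + y) = eomega q x * eomega q y := by
  haveI : NeZero q := ⟨hq.ne'⟩
  rw [eomega_eq_pow, eomega_eq_pow, eomega_eq_pow, ← pow_add, ZMod.val_add, zq_pow_mod q hq]

lemma zq_ne_zero (q : ℕ) : zq q ≠ 0 := Complex.exp_ne_zero _

lemma eomega_ne_zero (q : ℕ) (x : ZMod q) : eomega q x ≠ 0 := by
  rw [eomega_eq_pow]; exact pow_ne_zero _ (zq_ne_zero q)

lemma eomega_natCast (q : ℕ) (hq : 0 < q) (n : ℕ) :
    eomega q ((n : ℕ) : ZMod q) = zq q ^ n := by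
  haveI : NeZero q := ⟨hq.ne'⟩
  rw [eomega_eq_pow, ZMod.val_natCast, zq_pow_mod q hq]

lemma eomega_sub (q : ℕ) (hq : 0 < q) (x y : ZMod q) :
    eomega q (x - y) = eomega q x / eomega q y :=
  eq_div_of_mul_eq (eomega_ne_zero q y) (by rw [← eomega_add q hq, sub_add_cancel])

lemma eta_eq (p q : ℕ) (hp : 0 < p) (hq : 0 < q) (hpq : p ∣ q) :
    zq q ^ (q / p) = zq p := by
  rw [zq, zq, ← Complex.exp_nat_mul]
  congr 1
  have h : (p : ℂ) * ((q / p : ℕ) : ℂ) = (q : ℂ) := by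
    rw [← Nat.cast_mul, Nat.mul_div_cancel' hpq]
  have hq0 : (q : ℂ) ≠ 0 := Nat.cast_ne_zero.mpr hq.ne'
  have hp0 : (p : ℂ) ≠ 0 := Nat.cast_ne_zero.mpr hp.ne'
  field_simp
  linear_combination h

/-- if the digits of `r` and `s` differ in position `π_β(1)`, and for
`1 ≤ j ≤ p-1` the index `σ^j` has the same `p`-ary digits as `σ` except that its
`β`-th digit is `σ_β + j (mod p)`, then
`ω_q^{a^{t₁}_{σ,r} - a^{t₂}_{σ,s}} + Σ_{j=1}^{p-1} ω_q^{a^{t₁}_{σ^j,r} - a^{t₂}_{σ^j,s}} = 0`. -/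
theorem szccs_shifted_digit_sum_zero
    (p q m δ k : ℕ) (hp : p.Prime) (hq : 0 < q) (hpq : p ∣ q)
    (hm : 3 ≤ m) (hδ : δ < m) (hk1 : 1 ≤ k) (hk2 : k ≤ m - δ)
    (mcard : ℕ → ℕ) (pmap : ℕ → ℕ → ℕ) (lam : ℕ → ZMod q)
    (hmcard : ∀ β ∈ Finset.Icc 1 k, 1 ≤ mcard β)
    (hmaps : ∀ β ∈ Finset.Icc 1 k, ∀ γ ∈ Finset.Icc 1 (mcard β),
      pmap β γ ∈ Finset.Icc 1 (m - δ))
    (hpart : ∀ l ∈ Finset.Icc 1 (m - δ), ∃! bg : ℕ × ℕ,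
      bg.1 ∈ Finset.Icc 1 k ∧ bg.2 ∈ Finset.Icc 1 (mcard bg.1) ∧ pmap bg.1 bg.2 = l)
    (t₁ t₂ : ℕ) (ht₁ : t₁ < p ^ (k + δ)) (ht₂ : t₂ < p ^ (k + δ))
    (σ : ℕ) (hσ : σ < p ^ k)
    (r s : ℕ) (hr : r < p ^ m) (hs : s < p ^ m)
    (β : ℕ) (hβ : β ∈ Finset.Icc 1 k)
    (hdiff : dig p r (pmap β 1) ≠ dig p s (pmap β 1))
    (σ' : ℕ → ℕ)
    (hσ' : ∀ j ∈ Finset.Icc 1 (p - 1), σ' j < p ^ k ∧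
      ∀ i ∈ Finset.Icc 1 k,
        dig p (σ' j) i = if i = β then (dig p σ β + j) % p else dig p σ i) :
    eomega q (aseq p q m δ k mcard pmap lam t₁ σ r
        - aseq p q m δ k mcard pmap lam t₂ σ s)
      + ∑ j ∈ Finset.Icc 1 (p - 1),
        eomega q (aseq p q m δ k mcard pmap lam t₁ (σ' j) r
          - aseq p q m δ k mcard pmap lam t₂ (σ' j) s) = 0
     := by
  classical
  have hp0 : 0 < p := hp.pos
  haveI : NeZero q := ⟨hq.ne'⟩
  have hup : dig p r (pmap β 1) < p := by unfold dig; exact Nat.mod_lt _ hp0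
  have hvp : dig p s (pmap β 1) < p := by unfold dig; exact Nat.mod_lt _ hp0
  have hcp : ((q / p : ℕ) : ZMod q) * ((p : ℕ) : ZMod q) = 0 := by
    rw [← Nat.cast_mul, Nat.div_mul_cancel hpq, ZMod.natCast_self]
  have hdigit : ∀ a j : ℕ, ((q / p : ℕ) : ZMod q) * (((a + j) % p : ℕ) : ZMod q)
      = ((q / p : ℕ) : ZMod q) * ((a : ℕ) : ZMod q)
        + ((q / p : ℕ) : ZMod q) * ((j : ℕ) : ZMod q) := by
    intro a j
    have h := congrArg (Nat.cast : ℕ → ZMod q) (Nat.mod_add_div (a + j) p)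
    push_cast at h
    linear_combination ((q / p : ℕ) : ZMod q) * h - (((a + j) / p : ℕ) : ZMod q) * hcp
  have hshift : ∀ j ∈ Finset.Icc 1 (p - 1), ∀ t x : ℕ,
      aseq p q m δ k mcard pmap lam t (σ' j) x
        = aseq p q m δ k mcard pmap lam t σ x
          + (((q / p) * (j * dig p x (pmap β 1)) : ℕ) : ZMod q) := by
    intro j hj t x
    have hS : ((q / p : ℕ) : ZMod q) * ∑ β' ∈ Finset.Icc 1 k,
          ((dig p (σ' j) β' : ℕ) : ZMod q) * ((dig p x (pmap β' 1) : ℕ) : ZMod q)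
        = ((q / p : ℕ) : ZMod q) * ∑ β' ∈ Finset.Icc 1 k,
          ((dig p σ β' : ℕ) : ZMod q) * ((dig p x (pmap β' 1) : ℕ) : ZMod q)
          + ((q / p : ℕ) : ZMod q) * ((j : ℕ) : ZMod q)
            * ((dig p x (pmap β 1) : ℕ) : ZMod q) := by
      rw [Finset.mul_sum, Finset.mul_sum,
        ← Finset.sum_erase_add _ _ hβ, ← Finset.sum_erase_add _ _ hβ]
      have herase : ∑ β' ∈ (Finset.Icc 1 k).erase β,
            ((q / p : ℕ) : ZMod q) * (((dig p (σ' j) β' : ℕ) : ZMod q)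
              * ((dig p x (pmap β' 1) : ℕ) : ZMod q))
          = ∑ β' ∈ (Finset.Icc 1 k).erase β,
            ((q / p : ℕ) : ZMod q) * (((dig p σ β' : ℕ) : ZMod q)
              * ((dig p x (pmap β' 1) : ℕ) : ZMod q)) := by
        refine Finset.sum_congr rfl fun i hi => ?_
        rw [(hσ' j hj).2 i (Finset.mem_of_mem_erase hi), if_neg (Finset.ne_of_mem_erase hi)]
      rw [herase, (hσ' j hj).2 β hβ, if_pos rfl]
      linear_combination ((dig p x (pmap β 1) : ℕ) : ZMod q) * hdigit (dig p σ β) j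
    unfold aseq
    push_cast
    linear_combination hS
  set A : ZMod q := aseq p q m δ k mcard pmap lam t₁ σ r
      - aseq p q m δ k mcard pmap lam t₂ σ s with hA
  set η : ℂ := zq q ^ (q / p) with hη
  have hηprim : IsPrimitiveRoot η p := by
    rw [hη, eta_eq p q hp0 hq hpq]
    exact Complex.isPrimitiveRoot_exp p hp0.ne'
  have hη0 : η ≠ 0 := by rw [hη]; exact pow_ne_zero _ (zq_ne_zero q)
  set w : ℂ := η ^ dig p r (pmap β 1) / η ^ dig p s (pmap β 1) with hw
  have hηe : ∀ a b : ℕ, a < b → b < p → η ^ a ≠ η ^ b := by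
    intro a b hab hbp heq
    have h1 : η ^ a * η ^ (b - a) = η ^ a * 1 := by
      rw [mul_one, ← pow_add, Nat.add_sub_cancel' hab.le, heq]
    have h2 : η ^ (b - a) = 1 := mul_left_cancel₀ (pow_ne_zero a hη0) h1
    have h3 : p ∣ b - a := hηprim.dvd_of_pow_eq_one _ h2
    have h4 : p ≤ b - a := Nat.le_of_dvd (by omega) h3
    omega
  have hw1 : w ≠ 1 := by
    rw [hw, Ne, div_eq_one_iff_eq (pow_ne_zero _ hη0)]
    rcases lt_or_gt_of_ne hdiff with h | h
    · exact hηe _ _ h hvp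
    · exact fun e => hηe _ _ h hup e.symm
  have hpow1 : ∀ n : ℕ, (η ^ n) ^ p = 1 := fun n => by
    rw [← pow_mul, mul_comm, pow_mul, hηprim.pow_eq_one, one_pow]
  have hwp : w ^ p = 1 := by rw [hw, div_pow, hpow1, hpow1, div_one]
  have hgeom : ∑ j ∈ Finset.range p, w ^ j = 0 := by
    rw [geom_sum_eq hw1, hwp, sub_self, zero_div]
  have hterm : ∀ j ∈ Finset.Icc 1 (p - 1),
      eomega q (aseq p q m δ k mcard pmap lam t₁ (σ' j) r
        - aseq p q m δ k mcard pmap lam t₂ (σ' j) s) = eomega q A * w ^ j := by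
    intro j hj
    have hX : aseq p q m δ k mcard pmap lam t₁ (σ' j) r
        - aseq p q m δ k mcard pmap lam t₂ (σ' j) s
        = A + ((((q / p) * (j * dig p r (pmap β 1)) : ℕ) : ZMod q)
             - (((q / p) * (j * dig p s (pmap β 1)) : ℕ) : ZMod q)) := by
      rw [hshift j hj t₁ r, hshift j hj t₂ s, hA]; ring
    rw [hX, eomega_add q hq]
    congr 1
    rw [eomega_sub q hq, eomega_natCast q hq, eomega_natCast q hq, hw, div_pow]
    congr 1 <;>
      rw [pow_mul, ← hη, mul_comm j _, pow_mul]
  rw [Finset.sum_congr rfl hterm]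
  have hsum : (1 : ℂ) + ∑ j ∈ Finset.Icc 1 (p - 1), w ^ j
      = ∑ j ∈ Finset.range p, w ^ j := by
    have hp1 : p - 1 + 1 = p := Nat.succ_pred_eq_of_pos hp0
    rw [← hp1, Finset.sum_range_succ', pow_zero, ← Finset.Ico_add_one_right_eq_Icc,
      Finset.sum_Ico_eq_sum_range]
    simp [add_comm]
  calc eomega q A + ∑ j ∈ Finset.Icc 1 (p - 1), eomega q A * w ^ j
      = eomega q A * (1 + ∑ j ∈ Finset.Icc 1 (p - 1), w ^ j) := by
        rw [mul_add, mul_one, Finset.mul_sum]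
    _ = 0 := by rw [hsum, hgeom, mul_zero]
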